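/- If p is a polynomial such that p(ρA) is entrywise nonnegative for every ρ > 0 and every n×n row-stochastic matrix A with strictly positive entries, then p ∈ 𝒫ₙ. Conversely, if p ∈ 𝒫ₙ then p(ρA) is entrywise nonnegative for all such ρ and A. -/

import Mathlib

open Polynomial

def PolyPres (n : ℕ) : Set (Polynomial ℝ) :=
  {p | ∀ A : Matrix (Fin n) (Fin n) ℝ, (∀ i j, 0 ≤ A i j) →
    ∀ i j, 0 ≤ (aeval A p) i j}

section Aux

open Matrix Finset


lemma perron {n : ℕ} (hn : 0 < n) (B : Matrix (Fin n) (Fin n) ℝ)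
    (hB : ∀ i j, 0 < B i j) :
    ∃ ρ : ℝ, 0 < ρ ∧ ∃ d : Fin n → ℝ, (∀ i, 0 < d i) ∧ B.mulVec d = ρ • d := by
  haveI : Nonempty (Fin n) := ⟨⟨0, hn⟩⟩
  set C : Set (ℝ × (Fin n → ℝ)) :=
    {q | 0 ≤ q.1 ∧ (∀ i, 0 ≤ q.2 i) ∧ (∑ i, q.2 i) = 1 ∧
      ∀ i, q.1 * q.2 i ≤ B.mulVec q.2 i} with hCdef
  -- continuity helpers
  have hcx : ∀ i : Fin n, Continuous fun q : ℝ × (Fin n → ℝ) => q.2 i :=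
    fun i => (continuous_apply i).comp continuous_snd
  have hcmv : ∀ i : Fin n, Continuous fun q : ℝ × (Fin n → ℝ) => B.mulVec q.2 i := by
    intro i
    simp only [Matrix.mulVec, dotProduct]
    exact continuous_finset_sum _ fun j _ => continuous_const.mul (hcx j)
  have hC_closed : IsClosed C := by
    have h1 : IsClosed {q : ℝ × (Fin n → ℝ) | 0 ≤ q.1} :=
      isClosed_le continuous_const continuous_fst
    have h2 : IsClosed {q : ℝ × (Fin n → ℝ) | ∀ i, 0 ≤ q.2 i} := by
      rw [Set.setOf_forall]
      exact isClosed_iInter fun i => isClosed_le continuous_const (hcx i)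
    have h3 : IsClosed {q : ℝ × (Fin n → ℝ) | (∑ i, q.2 i) = 1} :=
      isClosed_eq (continuous_finset_sum _ fun i _ => hcx i) continuous_const
    have h4 : IsClosed {q : ℝ × (Fin n → ℝ) | ∀ i, q.1 * q.2 i ≤ B.mulVec q.2 i} := by
      rw [Set.setOf_forall]
      exact isClosed_iInter fun i =>
        isClosed_le (continuous_fst.mul (hcx i)) (hcmv i)
    have : C = _ ∩ (_ ∩ (_ ∩ _)) := rfl
    exact this ▸ h1.inter (h2.inter (h3.inter h4))
  set T : ℝ := ∑ i, ∑ j, B i j with hT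
  have hC_sub : C ⊆ Set.Icc (0, 0) (T, fun _ => (1:ℝ)) := by
    rintro ⟨t, x⟩ ⟨ht, hx, hsum, hle⟩
    have hx1 : ∀ j, x j ≤ 1 := by
      intro j
      calc x j ≤ ∑ i, x i := Finset.single_le_sum (fun i _ => hx i) (mem_univ j)
        _ = 1 := hsum
    constructor
    · exact ⟨ht, fun i => hx i⟩
    · constructor
      · calc t = t * ∑ i, x i := by rw [hsum, mul_one]
          _ = ∑ i, t * x i := by rw [Finset.mul_sum]
          _ ≤ ∑ i, B.mulVec x i := Finset.sum_le_sum fun i _ => hle i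
          _ = ∑ i, ∑ j, B i j * x j := rfl
          _ ≤ ∑ i, ∑ j, B i j := by
              refine Finset.sum_le_sum fun i _ => Finset.sum_le_sum fun j _ => ?_
              calc B i j * x j ≤ B i j * 1 :=
                    mul_le_mul_of_nonneg_left (hx1 j) (hB i j).le
                _ = B i j := mul_one _
      · exact fun i => hx1 i
  have hC_cpt : IsCompact C :=
    (isCompact_Icc).of_isClosed_subset hC_closed hC_sub
  -- nonempty element with positive t
  set x₀ : Fin n → ℝ := fun _ => (n : ℝ)⁻¹ with hx₀
  have hnR : (0:ℝ) < n := Nat.cast_pos.mpr hn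
  have hx₀pos : ∀ i, 0 < x₀ i := fun i => inv_pos.mpr hnR
  have hx₀sum : ∑ i, x₀ i = 1 := by
    simp [hx₀, Finset.card_univ, mul_inv_cancel₀ (ne_of_gt hnR)]
  have hmvpos : ∀ (x : Fin n → ℝ), (∀ j, 0 ≤ x j) → (∃ j, 0 < x j) →
      ∀ i, 0 < B.mulVec x i := by
    rintro x hx ⟨j₀, hj₀⟩ i
    refine Finset.sum_pos' (fun j _ => mul_nonneg (hB i j).le (hx j)) ⟨j₀, mem_univ j₀, ?_⟩
    exact mul_pos (hB i j₀) hj₀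
  have hmvx₀ : ∀ i, 0 < B.mulVec x₀ i :=
    hmvpos x₀ (fun j => (hx₀pos j).le) ⟨⟨0, hn⟩, hx₀pos ⟨0, hn⟩⟩
  obtain ⟨i₀, -, hi₀⟩ := Finset.exists_min_image Finset.univ (fun i => B.mulVec x₀ i)
    ⟨⟨0, hn⟩, mem_univ _⟩
  set t₀ : ℝ := n * B.mulVec x₀ i₀ with ht₀
  have ht₀pos : 0 < t₀ := mul_pos hnR (hmvx₀ i₀)
  have hmem₀ : (t₀, x₀) ∈ C := by
    refine ⟨ht₀pos.le, fun i => (hx₀pos i).le, hx₀sum, fun i => ?_⟩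
    have : t₀ * x₀ i = B.mulVec x₀ i₀ := by
      rw [ht₀]; show (n:ℝ) * B.mulVec x₀ i₀ * (n:ℝ)⁻¹ = _
      rw [mul_comm, ← mul_assoc, inv_mul_cancel₀ hnR.ne', one_mul]
    rw [this]
    exact hi₀ i (mem_univ i)
  obtain ⟨q, hqC, hqmax⟩ := hC_cpt.exists_isMaxOn ⟨(t₀, x₀), hmem₀⟩
    continuous_fst.continuousOn
  obtain ⟨t, x⟩ := q
  obtain ⟨ht, hx, hsum, hle⟩ := hqC
  have htpos : 0 < t := lt_of_lt_of_le ht₀pos (hqmax hmem₀)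
  have hxex : ∃ j, 0 < x j := by
    by_contra h
    push_neg at h
    have : ∑ i, x i = 0 := Finset.sum_eq_zero fun i _ => le_antisymm (h i) (hx i)
    rw [hsum] at this; norm_num at this
  have hz : ∀ i, 0 < B.mulVec x i := hmvpos x hx hxex
  -- claim eigen equality
  have heig : ∀ i, B.mulVec x i = t * x i := by
    by_contra h
    push_neg at h
    obtain ⟨i₁, hi₁⟩ := h
    set y : Fin n → ℝ := fun i => B.mulVec x i - t * x i with hy
    have hy0 : ∀ i, 0 ≤ y i := fun i => sub_nonneg.mpr (hle i)
    have hy1 : 0 < y i₁ := lt_of_le_of_ne (hy0 i₁) (by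
      simp only [hy]; intro hcontra
      exact hi₁ (by linarith [sub_eq_zero.mp hcontra.symm]))
    have hBy : ∀ i, 0 < B.mulVec y i := hmvpos y hy0 ⟨i₁, hy1⟩
    set z : Fin n → ℝ := B.mulVec x with hzdef
    have hBzy : ∀ i, B.mulVec z i = B.mulVec y i + t * z i := by
      intro i
      have : y = z - t • x := by
        funext k; simp [hy, hzdef, smul_eq_mul]
      rw [this, Matrix.mulVec_sub, Matrix.mulVec_smul]
      simp [hzdef, smul_eq_mul]
    obtain ⟨i₂, -, hi₂⟩ := Finset.exists_min_image Finset.univ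
      (fun i => B.mulVec y i / z i) ⟨⟨0, hn⟩, mem_univ _⟩
    set ε : ℝ := B.mulVec y i₂ / z i₂ with hε
    have hεpos : 0 < ε := div_pos (hBy i₂) (hz i₂)
    have hεle : ∀ i, ε * z i ≤ B.mulVec y i := by
      intro i
      have h1 : ε ≤ B.mulVec y i / z i := hi₂ i (mem_univ i)
      calc ε * z i ≤ (B.mulVec y i / z i) * z i :=
            mul_le_mul_of_nonneg_right h1 (hz i).le
        _ = B.mulVec y i := div_mul_cancel₀ _ (hz i).ne'
    set s : ℝ := ∑ i, z i with hs
    have hspos : 0 < s := Finset.sum_pos (fun i _ => hz i) univ_nonempty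
    set x' : Fin n → ℝ := fun i => s⁻¹ * z i with hx'
    have hmem' : (t + ε, x') ∈ C := by
      refine ⟨by positivity, fun i => (mul_pos (inv_pos.mpr hspos) (hz i)).le, ?_, fun i => ?_⟩
      · rw [← Finset.mul_sum, ← hs, inv_mul_cancel₀ hspos.ne']
      · have hmv' : B.mulVec x' i = s⁻¹ * B.mulVec z i := by
          have : x' = s⁻¹ • z := by funext k; simp [hx', smul_eq_mul]
          rw [this, Matrix.mulVec_smul]; simp [smul_eq_mul]
        rw [hmv', hBzy i]
        have : (t + ε) * x' i = s⁻¹ * ((t + ε) * z i) := by rw [hx']; ring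
        rw [this]
        have h2 : (t + ε) * z i ≤ B.mulVec y i + t * z i := by
          have := hεle i; nlinarith
        nlinarith [inv_pos.mpr hspos]
    have h5 : t + ε ≤ t := hqmax hmem'
    linarith
  refine ⟨t, htpos, x, fun i => ?_, ?_⟩
  · have h6 := hz i
    rw [heig i] at h6
    nlinarith [hx i]
  · funext i
    simp [heig i, smul_eq_mul]

lemma aeval_conj_aux {n : ℕ} (u v : Matrix (Fin n) (Fin n) ℝ)
    (huv : u * v = 1) (hvu : v * u = 1)
    (M : Matrix (Fin n) (Fin n) ℝ) (p : Polynomial ℝ) :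
    aeval (u * M * v) p = u * aeval M p * v := by
  have hpow : ∀ k : ℕ, (u * M * v) ^ k = u * M ^ k * v := by
    intro k; induction k with
    | zero => simpa using huv.symm
    | succ k ih =>
      rw [pow_succ, ih, pow_succ]
      calc u * M ^ k * v * (u * M * v)
          = u * M ^ k * ((v * u) * (M * v)) := by simp only [mul_assoc]
        _ = u * (M ^ k * M) * v := by rw [hvu, one_mul]; simp only [mul_assoc]
  induction p using Polynomial.induction_on' with
  | add f g hf hg => simp [map_add, hf, hg, mul_add, add_mul]
  | monomial k a =>
    rw [Polynomial.aeval_monomial, Polynomial.aeval_monomial, hpow]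
    simp only [Algebra.algebraMap_eq_smul_one, smul_mul_assoc, one_mul,
      mul_smul_comm]

lemma pos_case {n : ℕ} (hn : 0 < n) (p : Polynomial ℝ)
    (h : ∀ ρ : ℝ, 0 < ρ → ∀ A : Matrix (Fin n) (Fin n) ℝ,
        (∀ i j, 0 < A i j) → (∀ i, ∑ j, A i j = 1) →
        ∀ i j, 0 ≤ (aeval (ρ • A) p) i j)
    (B : Matrix (Fin n) (Fin n) ℝ) (hB : ∀ i j, 0 < B i j) :
    ∀ i j, 0 ≤ (aeval B p) i j := by
  obtain ⟨ρ, hρ, d, hd, heig⟩ := perron hn B hB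
  set u : Matrix (Fin n) (Fin n) ℝ := Matrix.diagonal (fun i => (d i)⁻¹) with hu
  set v : Matrix (Fin n) (Fin n) ℝ := Matrix.diagonal d with hv
  have huv : u * v = 1 := by
    rw [hu, hv, Matrix.diagonal_mul_diagonal,
      show (fun i => (d i)⁻¹ * d i) = fun _ => (1:ℝ) from
        funext fun i => inv_mul_cancel₀ (hd i).ne', Matrix.diagonal_one]
  have hvu : v * u = 1 := by
    rw [hu, hv, Matrix.diagonal_mul_diagonal,
      show (fun i => d i * (d i)⁻¹) = fun _ => (1:ℝ) from
        funext fun i => mul_inv_cancel₀ (hd i).ne', Matrix.diagonal_one]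
  have hentry : ∀ (P : Matrix (Fin n) (Fin n) ℝ) i j,
      (u * P * v) i j = (d i)⁻¹ * P i j * d j := by
    intro P i j
    rw [hu, hv, Matrix.mul_diagonal, Matrix.diagonal_mul]
  set A : Matrix (Fin n) (Fin n) ℝ := ρ⁻¹ • (u * B * v) with hA
  have hApos : ∀ i j, 0 < A i j := by
    intro i j
    rw [hA, Matrix.smul_apply, hentry, smul_eq_mul]
    have := hB i j
    have := hd i
    have := hd j
    positivity
  have hAsum : ∀ i, ∑ j, A i j = 1 := by
    intro i
    have hmv : ∑ j, B i j * d j = ρ * d i := by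
      have := congrFun heig i
      simpa [Matrix.mulVec, dotProduct, smul_eq_mul] using this
    calc ∑ j, A i j = ∑ j, ρ⁻¹ * ((d i)⁻¹ * B i j * d j) := by
          refine Finset.sum_congr rfl fun j _ => ?_
          rw [hA, Matrix.smul_apply, hentry, smul_eq_mul]
      _ = ρ⁻¹ * ((d i)⁻¹ * ∑ j, B i j * d j) := by
          rw [Finset.mul_sum, Finset.mul_sum]
          refine Finset.sum_congr rfl fun j _ => by ring
      _ = 1 := by
          rw [hmv]
          field_simp
          rw [div_self (hd i).ne']
  have hscal : ρ • A = u * B * v := by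
    rw [hA, smul_smul, mul_inv_cancel₀ hρ.ne', one_smul]
  have key := h ρ hρ A hApos hAsum
  rw [hscal] at key
  intro i j
  have key2 : 0 ≤ (u * aeval B p * v) i j := by
    rw [← aeval_conj_aux u v huv hvu B p]; exact key i j
  rw [hentry] at key2
  have key3 : 0 ≤ d i * ((d i)⁻¹ * (aeval B p) i j * d j) * (d j)⁻¹ :=
    mul_nonneg (mul_nonneg (hd i).le key2) (inv_nonneg.mpr (hd j).le)
  have heq : d i * ((d i)⁻¹ * (aeval B p) i j * d j) * (d j)⁻¹
      = (d i * (d i)⁻¹) * (aeval B p) i j * (d j * (d j)⁻¹) := by ring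
  rw [heq, mul_inv_cancel₀ (hd i).ne', mul_inv_cancel₀ (hd j).ne', one_mul, mul_one] at key3
  exact key3

end Aux

theorem polyPres_iff_positive_stochastic (n : ℕ) (hn : 0 < n) (p : Polynomial ℝ) :
    p ∈ PolyPres n ↔
      ∀ ρ : ℝ, 0 < ρ → ∀ A : Matrix (Fin n) (Fin n) ℝ,
        (∀ i j, 0 < A i j) → (∀ i, ∑ j, A i j = 1) →
        ∀ i j, 0 ≤ (aeval (ρ • A) p) i j := by
  constructor
  · intro hp ρ hρ A hA _ i j
    refine hp (ρ • A) (fun i j => ?_) i j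
    rw [Matrix.smul_apply, smul_eq_mul]
    exact mul_nonneg hρ.le (hA i j).le
  · intro h A hA i j
    set J : Matrix (Fin n) (Fin n) ℝ := fun _ _ => 1 with hJ
    have hpos : ∀ ε : ℝ, 0 < ε → ∀ i j, 0 ≤ (aeval (A + ε • J) p) i j := by
      intro ε hε
      refine pos_case hn p h _ (fun i j => ?_)
      have : (A + ε • J) i j = A i j + ε := by
        rw [Matrix.add_apply, Matrix.smul_apply, smul_eq_mul]; simp [hJ]
      rw [this]
      linarith [hA i j]
    have h1 : Continuous fun ε : ℝ => A + ε • J :=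
      continuous_const.add (continuous_id.smul continuous_const)
    have h2 : Continuous fun ε : ℝ => aeval (A + ε • J) p :=
      (Polynomial.continuous_aeval p).comp h1
    have hcont : Continuous fun ε : ℝ => (aeval (A + ε • J) p) i j :=
      (continuous_apply j).comp ((continuous_apply i).comp h2)
    have hlim : Filter.Tendsto (fun ε : ℝ => (aeval (A + ε • J) p) i j)
        (nhdsWithin 0 (Set.Ioi 0)) (nhds ((aeval (A + (0:ℝ) • J) p) i j)) :=
      (hcont.tendsto 0).mono_left nhdsWithin_le_nhds
    have h0 : 0 ≤ (aeval (A + (0:ℝ) • J) p) i j :=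
      ge_of_tendsto hlim (Filter.eventually_of_mem self_mem_nhdsWithin
        (fun ε hε => hpos ε hε i j))
    simpa using h0
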